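/- Let Q ≥ 1 and H ≥ 1 be integers, and let N = N₁ + N₂ with N₁, N₂ ≥ 0, N ≥ 1, and H·Q dividing N₂. Then for every T ≥ 1 there exists a (Q+H, N, Q, T)-scheme with singleton Reduce assignment (servers 1,…,Q are solvers, the remaining H servers are helpers reducing nothing) in which each solver maps exactly N₁ + N₂·(Q−1)/Q files, each helper maps exactly N₂/H files, and the communication load equals N₂/(N·Q²). -/

import Mathlib

/-- A (K,N,Q,T)-scheme: K servers, N input files, Q output functions,
T-bit intermediate values.  `M k` is the set of files mapped by server `k`,
`W k` the set of functions reduced by server `k`, `len k` the length (in bits)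
of server `k`'s message; `enc` produces the message of each server from its
locally computed intermediate values, and `dec` recovers, for each server `k`
and each `q ∈ W k`, the full row of intermediate values of function `q`
from all messages and the local values, correctly for every realization `v`. -/
structure Scheme (K N Q T : ℕ) where
  M : Fin K → Finset (Fin N)
  W : Fin K → Finset (Fin Q)
  cover : ∀ n : Fin N, ∃ k : Fin K, n ∈ M k
  len : Fin K → ℕ
  enc : (k : Fin K) → (Fin Q → {n : Fin N // n ∈ M k} → (Fin T → Bool)) →
    (Fin (len k) → Bool)
  dec : (k : Fin K) → (q : Fin Q) → q ∈ W k →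
    ((j : Fin K) → (Fin (len j) → Bool)) →
    (Fin Q → {n : Fin N // n ∈ M k} → (Fin T → Bool)) →
    (Fin N → Fin T → Bool)
  correct : ∀ (v : Fin Q × Fin N → Fin T → Bool) (k : Fin K) (q : Fin Q) (hq : q ∈ W k),
    dec k q hq (fun j => enc j (fun q' n => v (q', n.1))) (fun q' n => v (q', n.1)) =
      fun n => v (q, n)

/-- Peak computation load `p = (max_k |M k|)/N`. -/
noncomputable def peakLoad {K N Q T : ℕ} (S : Scheme K N Q T) : ℝ :=
  ((Finset.univ.sup (fun k : Fin K => (S.M k).card) : ℕ) : ℝ) / N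

/-- Communication load `L = (∑_k ℓ k)/(Q·N·T)`. -/
noncomputable def commLoad {K N Q T : ℕ} (S : Scheme K N Q T) : ℝ :=
  (∑ k : Fin K, (S.len k : ℝ)) / ((Q : ℝ) * N * T)

/-- Singleton Reduce assignment: the `W k` are pairwise disjoint, cover `Fin Q`,
and each server reduces at most one function. -/
def SingletonReduce {K N Q T : ℕ} (S : Scheme K N Q T) : Prop :=
  (∀ j k : Fin K, j ≠ k → Disjoint (S.W j) (S.W k)) ∧
  (∀ q : Fin Q, ∃ k : Fin K, q ∈ S.W k) ∧
  (∀ k : Fin K, (S.W k).card ≤ 1)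

namespace CDCAux

def b2z (b : Bool) : ZMod 2 := if b then 1 else 0
def z2b (x : ZMod 2) : Bool := decide (x = 1)

lemma z2b_b2z (b : Bool) : z2b (b2z b) = b := by cases b <;> decide
lemma b2z_z2b (x : ZMod 2) : b2z (z2b x) = x := by revert x; decide
lemma z2_add_self (x : ZMod 2) : x + x = 0 := by revert x; decide

variable (Q H m N1 T : ℕ)

def codeEquiv : Fin (N1 + H*Q*m) ≃ (Fin N1 ⊕ (Fin H × Fin Q) × Fin m) :=
  finSumFinEquiv.symm.trans (Equiv.sumCongr (Equiv.refl _)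
    (finProdFinEquiv.symm.trans (Equiv.prodCongr finProdFinEquiv.symm (Equiv.refl _))))

def solverCodes (s : Fin Q) : Finset (Fin N1 ⊕ (Fin H × Fin Q) × Fin m) :=
  Finset.disjSum Finset.univ ((Finset.univ ×ˢ Finset.univ.erase s) ×ˢ Finset.univ)

def helperCodes (h : Fin H) : Finset (Fin N1 ⊕ (Fin H × Fin Q) × Fin m) :=
  Finset.disjSum ∅ (({h} ×ˢ Finset.univ) ×ˢ Finset.univ)

lemma solverCodes_card (s : Fin Q) : (solverCodes Q H m N1 s).card = N1 + H * (Q-1) * m := by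
  simp [solverCodes, Finset.card_disjSum, Finset.card_product,
    Finset.card_erase_of_mem (Finset.mem_univ s), mul_assoc]

lemma helperCodes_card (h : Fin H) : (helperCodes Q H m N1 h).card = Q * m := by
  simp [helperCodes, Finset.card_disjSum, Finset.card_product]

def theM (k : Fin (Q+H)) : Finset (Fin (N1 + H*Q*m)) :=
  if hk : (k:ℕ) < Q then
    (solverCodes Q H m N1 ⟨k, hk⟩).map (codeEquiv Q H m N1).symm.toEmbedding
  else
    (helperCodes Q H m N1 ⟨(k:ℕ) - Q, by have := k.isLt; omega⟩).map
      (codeEquiv Q H m N1).symm.toEmbedding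

lemma mem_theM_solver_iff (k : Fin (Q+H)) (hk : (k:ℕ) < Q) (n : Fin (N1 + H*Q*m)) :
    n ∈ theM Q H m N1 k ↔ codeEquiv Q H m N1 n ∈ solverCodes Q H m N1 ⟨k, hk⟩ := by
  rw [theM, dif_pos hk, Finset.mem_map_equiv, Equiv.symm_symm]

lemma mem_theM_helper_iff (k : Fin (Q+H)) (hk : ¬ (k:ℕ) < Q) (n : Fin (N1 + H*Q*m)) :
    n ∈ theM Q H m N1 k ↔
      codeEquiv Q H m N1 n ∈ helperCodes Q H m N1 ⟨(k:ℕ) - Q, by have := k.isLt; omega⟩ := by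
  rw [theM, dif_neg hk, Finset.mem_map_equiv, Equiv.symm_symm]

lemma mem_solverCodes_inl (s : Fin Q) (a : Fin N1) : Sum.inl a ∈ solverCodes Q H m N1 s := by
  simp [solverCodes]

lemma mem_solverCodes_inr (s : Fin Q) (h : Fin H) (g : Fin Q) (i : Fin m) (hg : g ≠ s) :
    Sum.inr ((h, g), i) ∈ solverCodes Q H m N1 s := by
  simp [solverCodes, hg]

lemma mem_helperCodes_inr (h : Fin H) (g : Fin Q) (i : Fin m) :
    Sum.inr ((h, g), i) ∈ helperCodes Q H m N1 h := by
  simp [helperCodes]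

def theW (k : Fin (Q+H)) : Finset (Fin Q) :=
  if hk : (k:ℕ) < Q then {⟨k, hk⟩} else ∅

def theLen (k : Fin (Q+H)) : ℕ := if (k:ℕ) < Q then 0 else m*T

def helperIdx (h : Fin H) : Fin (Q+H) := ⟨Q + h, by have := h.isLt; omega⟩

lemma helperIdx_val (h : Fin H) : (helperIdx Q H h : ℕ) = Q + h := rfl

lemma theLen_helperIdx (h : Fin H) : theLen Q H m T (helperIdx Q H h) = m*T := by
  simp only [theLen, helperIdx]
  exact if_neg (by omega)

def theEnc (k : Fin (Q+H))
    (u : Fin Q → {n : Fin (N1 + H*Q*m) // n ∈ theM Q H m N1 k} → Fin T → Bool) :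
    Fin (theLen Q H m T k) → Bool :=
  fun j =>
    if hk : (k:ℕ) < Q then false else
      let it := finProdFinEquiv.symm (Fin.cast (by simp [theLen, hk]) j : Fin (m*T))
      z2b (∑ g : Fin Q, b2z (u g
        ⟨(codeEquiv Q H m N1).symm (Sum.inr ((⟨(k:ℕ) - Q, by have := k.isLt; omega⟩, g), it.1)),
          by rw [mem_theM_helper_iff Q H m N1 k hk, Equiv.apply_symm_apply]
             exact mem_helperCodes_inr Q H m N1 _ _ _⟩ it.2))

def theDec (k : Fin (Q+H)) (q : Fin Q)
    (msgs : (j : Fin (Q+H)) → Fin (theLen Q H m T j) → Bool)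
    (u : Fin Q → {n : Fin (N1 + H*Q*m) // n ∈ theM Q H m N1 k} → Fin T → Bool) :
    Fin (N1 + H*Q*m) → Fin T → Bool :=
  fun n t =>
    if hm : n ∈ theM Q H m N1 k then u q ⟨n, hm⟩ t else
      Sum.elim (fun _ => false)
        (fun c : (Fin H × Fin Q) × Fin m =>
          z2b (b2z (msgs (helperIdx Q H c.1.1)
                (Fin.cast (theLen_helperIdx Q H m T c.1.1).symm (finProdFinEquiv (c.2, t)))) +
            ∑ g' ∈ Finset.univ.erase c.1.2,
              b2z (if hm' : (codeEquiv Q H m N1).symm (Sum.inr ((c.1.1, g'), c.2)) ∈ theM Q H m N1 k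
                then u g' ⟨_, hm'⟩ t else false)))
        (codeEquiv Q H m N1 n)

lemma theW_mem (k : Fin (Q+H)) (q : Fin Q) (hq : q ∈ theW Q H k) :
    ∃ hk : (k:ℕ) < Q, q = ⟨k, hk⟩ := by
  by_cases hk : (k:ℕ) < Q
  · rw [theW, dif_pos hk, Finset.mem_singleton] at hq
    exact ⟨hk, hq⟩
  · rw [theW, dif_neg hk] at hq; simp at hq

lemma cover (hQ : 0 < Q) (n : Fin (N1 + H*Q*m)) : ∃ k : Fin (Q+H), n ∈ theM Q H m N1 k := by
  rcases hc : codeEquiv Q H m N1 n with a | ⟨⟨h, g⟩, i⟩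
  · refine ⟨⟨0, by omega⟩, ?_⟩
    rw [mem_theM_solver_iff Q H m N1 _ (by simpa using hQ), hc]
    exact mem_solverCodes_inl Q H m N1 _ a
  · refine ⟨helperIdx Q H h, ?_⟩
    rw [mem_theM_helper_iff Q H m N1 _ (by rw [helperIdx_val]; omega), hc]
    have hh : (⟨(helperIdx Q H h : ℕ) - Q,
        by have := (helperIdx Q H h).isLt; have := helperIdx_val Q H h; omega⟩ : Fin H) = h := by
      apply Fin.ext; simp [helperIdx_val]
    rw [hh]
    exact mem_helperCodes_inr Q H m N1 h g i

lemma correct (v : Fin Q × Fin (N1 + H*Q*m) → Fin T → Bool) (k : Fin (Q+H)) (q : Fin Q)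
    (hq : q ∈ theW Q H k) :
    theDec Q H m N1 T k q
      (fun j => theEnc Q H m N1 T j (fun q' n => v (q', n.1)))
      (fun q' n => v (q', n.1)) = fun n => v (q, n) := by
  obtain ⟨hk, rfl⟩ := theW_mem Q H k q hq
  funext n t
  rw [theDec]
  by_cases hm : n ∈ theM Q H m N1 k
  · rw [dif_pos hm]
  · rw [dif_neg hm]
    rcases hc : codeEquiv Q H m N1 n with a | ⟨⟨h, g⟩, i⟩
    · exfalso
      exact hm ((mem_theM_solver_iff Q H m N1 k hk n).2
        (hc ▸ mem_solverCodes_inl Q H m N1 _ a))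
    · have hg : g = ⟨k, hk⟩ := by
        by_contra hne
        exact hm ((mem_theM_solver_iff Q H m N1 k hk n).2
          (hc ▸ mem_solverCodes_inr Q H m N1 _ h g i hne))
      have hn : n = (codeEquiv Q H m N1).symm (Sum.inr ((h, g), i)) := by
        rw [Equiv.eq_symm_apply, hc]
      rw [Sum.elim_inr]
      -- evaluate the encoder
      rw [theEnc]
      simp only
      rw [dif_neg (by rw [helperIdx_val]; omega)]
      have hcast : ∀ (p1 : m*T = theLen Q H m T (helperIdx Q H h))
          (p2 : theLen Q H m T (helperIdx Q H h) = m*T) (x : Fin (m*T)),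
          Fin.cast p2 (Fin.cast p1 x) = x := fun p1 p2 x => Fin.eq_of_val_eq (by simp)
      rw [hcast, Equiv.symm_apply_apply]
      have hh : ∀ p : ((helperIdx Q H h : ℕ) - Q < H),
          (⟨(helperIdx Q H h : ℕ) - Q, p⟩ : Fin H) = h := fun p =>
        Fin.eq_of_val_eq (by show (helperIdx Q H h : ℕ) - Q = (h:ℕ); rw [helperIdx_val]; omega)
      rw [hh, b2z_z2b]
      subst hg
      have hsum :
        (∑ g' ∈ Finset.univ.erase (⟨(k:ℕ), hk⟩ : Fin Q),
          b2z (if hm' : (codeEquiv Q H m N1).symm (Sum.inr ((h, g'), i)) ∈ theM Q H m N1 k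
            then v (g', ((codeEquiv Q H m N1).symm (Sum.inr ((h, g'), i)) : Fin (N1+H*Q*m))) t
            else false)) =
        ∑ g' ∈ Finset.univ.erase (⟨(k:ℕ), hk⟩ : Fin Q),
          b2z (v (g', (codeEquiv Q H m N1).symm (Sum.inr ((h, g'), i))) t) := by
        refine Finset.sum_congr rfl (fun g' hg' => ?_)
        have hmem : (codeEquiv Q H m N1).symm (Sum.inr ((h, g'), i)) ∈ theM Q H m N1 k := by
          rw [mem_theM_solver_iff Q H m N1 k hk, Equiv.apply_symm_apply]
          exact mem_solverCodes_inr Q H m N1 _ h g' i (Finset.ne_of_mem_erase hg')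
        rw [dif_pos hmem]
      rw [hsum, ← Finset.add_sum_erase _ _ (Finset.mem_univ (⟨(k:ℕ), hk⟩ : Fin Q)),
        add_assoc, z2_add_self, add_zero, z2b_b2z, ← hn]

lemma sum_theLen : ∑ k : Fin (Q+H), theLen Q H m T k = H * (m*T) := by
  have h1 : ∑ k : Fin (Q+H), theLen Q H m T k
      = ∑ i ∈ Finset.range (Q+H), (if i < Q then 0 else m*T) :=
    Fin.sum_univ_eq_sum_range (fun i => if i < Q then 0 else m*T) (Q+H)
  rw [h1, Finset.range_eq_Ico,
    ← Finset.sum_Ico_consecutive _ (Nat.zero_le Q) (Nat.le_add_right Q H)]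
  have h2 : (∑ i ∈ Finset.Ico 0 Q, if i < Q then 0 else m*T) = 0 :=
    Finset.sum_eq_zero (fun i hi => if_pos (Finset.mem_Ico.1 hi).2)
  have h3 : (∑ i ∈ Finset.Ico Q (Q+H), if i < Q then 0 else m*T) = H * (m*T) := by
    have he : ∀ i ∈ Finset.Ico Q (Q+H), (if i < Q then 0 else m*T) = m*T :=
      fun i hi => if_neg (by have := (Finset.mem_Ico.1 hi).1; omega)
    rw [Finset.sum_congr rfl he, Finset.sum_const, Nat.card_Ico, smul_eq_mul]
    congr 1
    omega
  rw [h2, h3, zero_add]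

def theScheme (hQ : 0 < Q) : Scheme (Q+H) (N1+H*Q*m) Q T where
  M := theM Q H m N1
  W := theW Q H
  cover := cover Q H m N1 hQ
  len := theLen Q H m T
  enc := theEnc Q H m N1 T
  dec := fun k q _ => theDec Q H m N1 T k q
  correct := fun v k q hq => correct Q H m N1 T v k q hq

end CDCAux

/-- achievability for the high-computation regime
(`r ∈ (Q-1, Q]`): `N₁` files are mapped at all solvers (no communication
needed for them) and the remaining `N₂` files are handled with `r = Q - 1`. -/



theorem coded_scheme_exists_high (Q H N N1 N2 : ℕ) (hQ : 1 ≤ Q) (hH : 1 ≤ H)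
    (hN : N = N1 + N2) (hNpos : 1 ≤ N) (hdvd : H * Q ∣ N2) :
    ∀ T : ℕ, 1 ≤ T → ∃ S : Scheme (Q + H) N Q T,
      SingletonReduce S ∧
      (∀ (k : Fin (Q + H)) (h : (k : ℕ) < Q), S.W k = {⟨(k : ℕ), h⟩}) ∧
      (∀ k : Fin (Q + H), Q ≤ (k : ℕ) → S.W k = ∅) ∧
      (∀ k : Fin (Q + H), (k : ℕ) < Q → (S.M k).card * Q = N1 * Q + N2 * (Q - 1)) ∧
      (∀ k : Fin (Q + H), Q ≤ (k : ℕ) → (S.M k).card * H = N2) ∧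
      commLoad S = (N2 : ℝ) / ((N : ℝ) * (Q : ℝ) ^ 2) := by
  intro T hT
  subst hN
  obtain ⟨m, rfl⟩ := hdvd
  refine ⟨CDCAux.theScheme Q H m N1 T (by omega), ?_, ?_, ?_, ?_, ?_, ?_⟩
  · refine ⟨?_, ?_, ?_⟩
    · intro j k hjk
      show Disjoint (CDCAux.theW Q H j) (CDCAux.theW Q H k)
      unfold CDCAux.theW
      split_ifs with h1 h2 h2 <;> simp
      exact fun hcontra => hjk (Fin.eq_of_val_eq hcontra)
    · intro q
      refine ⟨⟨(q:ℕ), by omega⟩, ?_⟩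
      show q ∈ CDCAux.theW Q H _
      unfold CDCAux.theW
      rw [dif_pos (show ((⟨(q:ℕ), by omega⟩ : Fin (Q+H)) : ℕ) < Q from q.isLt)]
      simp
    · intro k
      show (CDCAux.theW Q H k).card ≤ 1
      unfold CDCAux.theW
      split_ifs <;> simp
  · intro k h
    exact dif_pos h
  · intro k h
    exact dif_neg (by omega)
  · intro k hk
    show (CDCAux.theM Q H m N1 k).card * Q = _
    rw [CDCAux.theM, dif_pos hk, Finset.card_map, CDCAux.solverCodes_card]
    obtain ⟨q, rfl⟩ : ∃ q, Q = q + 1 := ⟨Q - 1, by omega⟩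
    simp only [Nat.add_sub_cancel]
    ring
  · intro k hk
    show (CDCAux.theM Q H m N1 k).card * H = _
    rw [CDCAux.theM, dif_neg (by omega), Finset.card_map, CDCAux.helperCodes_card]
    ring
  · show ((∑ k : Fin (Q+H), ((CDCAux.theLen Q H m T k : ℕ) : ℝ)) / _) = _
    rw [← Nat.cast_sum, CDCAux.sum_theLen]
    have hQ' : ((Q:ℕ):ℝ) ≠ 0 := Nat.cast_ne_zero.2 (by omega)
    have hT' : ((T:ℕ):ℝ) ≠ 0 := Nat.cast_ne_zero.2 (by omega)
    have hN' : ((N1 + H*Q*m : ℕ):ℝ) ≠ 0 := Nat.cast_ne_zero.2 (by omega)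
    push_cast at hN' ⊢
    field_simp
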